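/- Dilution of relative entropy: for density operators ρ, σ with supp ρ ⊆ supp σ and 0 ≤ λ ≤ 1, the relative entropy of the mixture satisfies D(λρ + (1−λ)σ ‖ σ) = λD(ρ‖σ) − α for some α with 0 ≤ α ≤ H₂(λ). -/

import Mathlib

open Matrix Kronecker
open scoped ComplexOrder

/-- Matrix logarithm (base 2) of a Hermitian matrix via its spectral
decomposition, with the convention `log 0 = 0`; junk value `0` on
non-Hermitian input. -/
noncomputable def matLog {ι : Type*} [Fintype ι] [DecidableEq ι]
    (A : Matrix ι ι ℂ) : Matrix ι ι ℂ :=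
  if h : A.IsHermitian then
    (h.eigenvectorUnitary : Matrix ι ι ℂ) *
      Matrix.diagonal (fun i => (Real.logb 2 (h.eigenvalues i) : ℂ)) *
      star (h.eigenvectorUnitary : Matrix ι ι ℂ)
  else 0

/-- Quantum relative entropy `D(ρ‖σ) = tr ρ (log ρ − log σ)` (base-2 logs). -/
noncomputable def relEnt {ι : Type*} [Fintype ι] [DecidableEq ι]
    (ρ σ : Matrix ι ι ℂ) : ℝ :=
  ((ρ * (matLog ρ - matLog σ)).trace).re

/-- Von Neumann entropy `S(ρ) = −tr ρ log ρ` (base-2 log). -/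
noncomputable def vnEnt {ι : Type*} [Fintype ι] [DecidableEq ι]
    (ρ : Matrix ι ι ℂ) : ℝ :=
  -((ρ * matLog ρ).trace).re

/-- `ρ` is a density matrix: positive semidefinite with unit trace. -/
def IsDensity {ι : Type*} [Fintype ι] (ρ : Matrix ι ι ℂ) : Prop :=
  ρ.PosSemidef ∧ ρ.trace = 1

/-- Support inclusion `supp ρ ⊆ supp σ` (for PSD matrices), expressed via
kernel containment: every vector annihilated by `σ` is annihilated by `ρ`. -/
def SuppLE {ι : Type*} [Fintype ι] (ρ σ : Matrix ι ι ℂ) : Prop :=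
  ∀ v : ι → ℂ, σ *ᵥ v = 0 → ρ *ᵥ v = 0

/-- The binary entropy function (base-2 logs, with `H₂ 0 = H₂ 1 = 0`). -/
noncomputable def binEnt (x : ℝ) : ℝ :=
  -(x * Real.logb 2 x) - (1 - x) * Real.logb 2 (1 - x)

/-! ### Auxiliary lemmas -/

lemma negMulLog_smul_le {c x : ℝ} (hc0 : 0 ≤ c) (hc1 : c ≤ 1) (hx : 0 ≤ x) :
    c * Real.negMulLog x ≤ Real.negMulLog (c * x) := by
  rw [Real.negMulLog_mul]
  have : 0 ≤ x * Real.negMulLog c := mul_nonneg hx (Real.negMulLog_nonneg hc0 hc1)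
  linarith

lemma sum_negMulLog_le {ι : Type*} [Fintype ι] (w x : ι → ℝ)
    (hw0 : ∀ k, 0 ≤ w k) (hw1 : ∑ k, w k ≤ 1) (hx : ∀ k, 0 ≤ x k) :
    ∑ k, w k * Real.negMulLog (x k) ≤ Real.negMulLog (∑ k, w k * x k) := by
  set s := ∑ k, w k with hs
  have hs0 : 0 ≤ s := Finset.sum_nonneg fun k _ => hw0 k
  rcases eq_or_lt_of_le hs0 with h0 | h0
  · have hz : ∀ k ∈ Finset.univ, w k = 0 :=
      (Finset.sum_eq_zero_iff_of_nonneg (fun k _ => hw0 k)).mp h0.symm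
    have h1 : ∀ k ∈ (Finset.univ : Finset ι), w k * Real.negMulLog (x k) = 0 := by
      intro k hk; rw [hz k hk, zero_mul]
    rw [Finset.sum_congr rfl h1]
    have h2 : ∀ k ∈ (Finset.univ : Finset ι), w k * x k = 0 := by
      intro k hk; rw [hz k (Finset.mem_univ k), zero_mul]
    rw [Finset.sum_congr rfl h2]
    simp
  · have key := Real.concaveOn_negMulLog.le_map_sum (t := Finset.univ)
      (w := fun k => w k / s) (p := x) (fun k _ => div_nonneg (hw0 k) h0.le)
      (by rw [← Finset.sum_div, ← hs]; field_simp) (fun k _ => hx k)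
    simp only [smul_eq_mul] at key
    have h2 : ∑ k, (w k / s) * x k = (∑ k, w k * x k) / s := by
      rw [Finset.sum_div]; exact Finset.sum_congr rfl fun k _ => by ring
    rw [h2] at key
    have h3 : ∑ k, w k * Real.negMulLog (x k)
        = s * ∑ k, (w k / s) * Real.negMulLog (x k) := by
      rw [Finset.mul_sum]; exact Finset.sum_congr rfl fun k _ => by field_simp
    rw [h3]
    calc s * ∑ k, (w k / s) * Real.negMulLog (x k)
        ≤ s * Real.negMulLog ((∑ k, w k * x k) / s) :=
          mul_le_mul_of_nonneg_left key hs0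
      _ ≤ Real.negMulLog (s * ((∑ k, w k * x k) / s)) := by
          refine negMulLog_smul_le hs0 hw1 ?_
          exact div_nonneg (Finset.sum_nonneg fun k _ => mul_nonneg (hw0 k) (hx k)) hs0
      _ = Real.negMulLog (∑ k, w k * x k) := by
          rw [mul_div_cancel₀ _ (ne_of_gt h0)]

lemma sum_negMulLog_le_of_doublyStochastic {ι κ : Type*} [Fintype ι] [Fintype κ]
    (D : ι → κ → ℝ) (p : κ → ℝ)
    (hD0 : ∀ k i, 0 ≤ D k i) (hrow : ∀ k, ∑ i, D k i = 1) (hcol : ∀ i, ∑ k, D k i = 1)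
    (hp : ∀ i, 0 ≤ p i) :
    ∑ i, Real.negMulLog (p i) ≤ ∑ k, Real.negMulLog (∑ i, D k i * p i) := by
  calc ∑ i, Real.negMulLog (p i) = ∑ i, (∑ k, D k i) * Real.negMulLog (p i) := by
        refine Finset.sum_congr rfl fun i _ => ?_
        rw [hcol i, one_mul]
    _ = ∑ k, ∑ i, D k i * Real.negMulLog (p i) := by
        rw [Finset.sum_comm]
        exact Finset.sum_congr rfl fun i _ => by rw [Finset.sum_mul]
    _ ≤ ∑ k, Real.negMulLog (∑ i, D k i * p i) :=
        Finset.sum_le_sum fun k _ =>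
          sum_negMulLog_le _ _ (hD0 k) (le_of_eq (hrow k)) hp

lemma bessel_aux {ι κ : Type*} [Fintype ι] [Fintype κ] [DecidableEq ι] [DecidableEq κ]
    (M : ι → κ → ℂ) (r : ι → ℝ) (hr : ∀ k, 0 ≤ r k)
    (horth : ∀ k k', ∑ b, M k b * star (M k' b) = if k = k' then (r k : ℂ) else 0) (a : κ) :
    ∑ k, Complex.normSq (M k a) / r k ≤ 1 := by
  classical
  set v : {k // r k ≠ 0} → EuclideanSpace ℂ κ :=
    fun k => (WithLp.equiv 2 (κ → ℂ)).symm (fun b => M k.1 b / (Real.sqrt (r k.1) : ℂ)) with hv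
  have hvapp : ∀ (k : {k // r k ≠ 0}) (b : κ), v k b = M k.1 b / (Real.sqrt (r k.1) : ℂ) :=
    fun k b => rfl
  have hsq : ∀ (k : {k // r k ≠ 0}),
      (Real.sqrt (r k.1) : ℂ) * (Real.sqrt (r k.1) : ℂ) = (r k.1 : ℂ) := by
    intro k
    rw [← Complex.ofReal_mul, Real.mul_self_sqrt (hr k.1)]
  have hinner : ∀ k k' : {k // r k ≠ 0},
      (inner ℂ (v k) (v k') : ℂ)
        = (if k.1 = k'.1 then (r k.1 : ℂ) else 0)
            / ((Real.sqrt (r k.1) : ℂ) * (Real.sqrt (r k'.1) : ℂ)) := by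
    intro k k'
    rw [PiLp.inner_apply]
    have h1 : ∀ b, (inner ℂ (v k b) (v k' b) : ℂ)
        = ((starRingEnd ℂ) (M k.1 b) * M k'.1 b)
            / ((Real.sqrt (r k.1) : ℂ) * (Real.sqrt (r k'.1) : ℂ)) := by
      intro b
      rw [RCLike.inner_apply, hvapp, hvapp, map_div₀, Complex.conj_ofReal]
      ring
    rw [Finset.sum_congr rfl fun b _ => h1 b, ← Finset.sum_div]
    congr 1
    have h2 : ∀ b, (starRingEnd ℂ) (M k.1 b) * M k'.1 b
        = (starRingEnd ℂ) (M k.1 b * star (M k'.1 b)) := by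
      intro b
      simp only [Complex.star_def, _root_.map_mul, Complex.conj_conj]
    rw [Finset.sum_congr rfl fun b _ => h2 b, ← map_sum, horth]
    split <;> simp [Complex.conj_ofReal]
  have hortho : Orthonormal ℂ v := by
    rw [orthonormal_iff_ite]
    intro k k'
    rw [hinner]
    by_cases h : k = k'
    · subst h
      rw [if_pos rfl, if_pos rfl, hsq k, div_self (by exact_mod_cast k.2)]
    · have h' : k.1 ≠ k'.1 := fun hc => h (Subtype.ext hc)
      simp [h, h']
  have hbessel := hortho.sum_inner_products_le (x := EuclideanSpace.single a (1 : ℂ))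
      (s := Finset.univ)
  have hnorm1 : ‖EuclideanSpace.single a (1 : ℂ)‖ ^ 2 = 1 := by
    rw [EuclideanSpace.norm_single]; norm_num
  rw [hnorm1] at hbessel
  have hterm : ∀ k : {k // r k ≠ 0},
      ‖(inner ℂ (v k) (EuclideanSpace.single a (1 : ℂ)) : ℂ)‖ ^ 2
        = Complex.normSq (M k.1 a) / r k.1 := by
    intro k
    rw [EuclideanSpace.inner_single_right, one_mul, RCLike.norm_conj, hvapp,
      Complex.sq_norm, Complex.normSq_div, Complex.normSq_ofReal,
      Real.mul_self_sqrt (hr k.1)]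
  rw [Finset.sum_congr rfl fun k _ => hterm k] at hbessel
  have hfilter : ∑ k, Complex.normSq (M k a) / r k
      = ∑ k ∈ Finset.univ.filter (fun k => r k ≠ 0), Complex.normSq (M k a) / r k := by
    symm
    refine Finset.sum_filter_of_ne fun k _ hk => ?_
    intro hrk
    exact hk (by rw [hrk, div_zero])
  rw [hfilter]
  rw [Finset.sum_subtype (p := fun k => r k ≠ 0) _ (by simp)
    (fun k => Complex.normSq (M k a) / r k)]
  exact hbessel

lemma mixture_entropy_le {ι κ : Type*} [Fintype ι] [Fintype κ]
    (B : ι → κ → ℝ) (r : ι → ℝ) (c : κ → ℝ)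
    (hB : ∀ k a, 0 ≤ B k a) (hr : ∀ k, 0 ≤ r k)
    (hrow : ∀ k, ∑ a, B k a = r k) (hcol : ∀ a, ∑ k, B k a = c a)
    (hbessel : ∀ a, ∑ k, B k a / r k ≤ 1) :
    ∑ k, Real.negMulLog (r k) ≤ ∑ a, Real.negMulLog (c a) := by
  have hB0 : ∀ k, r k = 0 → ∀ a, B k a = 0 := by
    intro k hk a
    have := (Finset.sum_eq_zero_iff_of_nonneg (fun a _ => hB k a)).mp
      (by rw [hrow k, hk])
    exact this a (Finset.mem_univ a)
  have hrep : ∀ k a, (B k a / r k) * r k = B k a := by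
    intro k a
    by_cases h : r k = 0
    · rw [h, mul_zero, hB0 k h a]
    · rw [div_mul_cancel₀ _ h]
  have step : ∀ a, ∑ k, (B k a / r k) * Real.negMulLog (r k) ≤ Real.negMulLog (c a) := by
    intro a
    have := sum_negMulLog_le (fun k => B k a / r k) r
      (fun k => div_nonneg (hB k a) (hr k)) (hbessel a) hr
    rwa [Finset.sum_congr rfl (fun k _ => hrep k a), hcol a] at this
  calc ∑ k, Real.negMulLog (r k)
      = ∑ k, ∑ a, (B k a / r k) * Real.negMulLog (r k) := by
        refine Finset.sum_congr rfl fun k _ => ?_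
        by_cases h : r k = 0
        · simp [h, Real.negMulLog_zero]
        · rw [← Finset.sum_mul, ← Finset.sum_div, hrow k, div_self h, one_mul]
    _ = ∑ a, ∑ k, (B k a / r k) * Real.negMulLog (r k) := Finset.sum_comm
    _ ≤ ∑ a, Real.negMulLog (c a) := Finset.sum_le_sum fun a _ => step a

lemma trace_mul_matLog_self {ι : Type*} [Fintype ι] [DecidableEq ι]
    {A : Matrix ι ι ℂ} (hA : A.IsHermitian) :
    (A * matLog A).trace
      = ((∑ k, hA.eigenvalues k * Real.logb 2 (hA.eigenvalues k) : ℝ) : ℂ) := by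
  rw [matLog, dif_pos hA]
  set U : Matrix ι ι ℂ := (hA.eigenvectorUnitary : Matrix ι ι ℂ) with hUdef
  set D : Matrix ι ι ℂ := Matrix.diagonal (RCLike.ofReal ∘ hA.eigenvalues) with hDdef
  set L : Matrix ι ι ℂ :=
    Matrix.diagonal (fun i => (Real.logb 2 (hA.eigenvalues i) : ℂ)) with hLdef
  have hU : star U * U = 1 := Matrix.mem_unitaryGroup_iff'.mp hA.eigenvectorUnitary.2
  have hspec : A = U * D * star U := hA.spectral_theorem
  have h1 : A * (U * L * star U) = U * (D * L) * star U := by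
    rw [hspec]
    calc U * D * star U * (U * L * star U)
        = U * D * (star U * U) * L * star U := by
          simp only [Matrix.mul_assoc]
      _ = U * (D * L) * star U := by rw [hU]; simp only [Matrix.mul_one, Matrix.mul_assoc]
  rw [h1, Matrix.trace_mul_cycle, ← Matrix.mul_assoc, hU, Matrix.one_mul]
  rw [hDdef, hLdef, Matrix.diagonal_mul_diagonal, Matrix.trace_diagonal]
  push_cast
  rfl

lemma trace_eq_sum_eigenvalues {ι : Type*} [Fintype ι] [DecidableEq ι]
    {A : Matrix ι ι ℂ} (hA : A.IsHermitian) :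
    A.trace = ((∑ k, hA.eigenvalues k : ℝ) : ℂ) := by
  have hU : star (hA.eigenvectorUnitary : Matrix ι ι ℂ)
      * (hA.eigenvectorUnitary : Matrix ι ι ℂ) = 1 :=
    Matrix.mem_unitaryGroup_iff'.mp hA.eigenvectorUnitary.2
  conv_lhs => rw [hA.spectral_theorem]
  rw [Unitary.conjStarAlgAut_apply, Matrix.trace_mul_cycle, hU, Matrix.one_mul,
    Matrix.trace_diagonal]
  push_cast
  rfl

lemma conj_diag_entry {ι : Type*} [Fintype ι] [DecidableEq ι]
    (N : Matrix ι ι ℂ) (d : ι → ℝ) (k k' : ι) :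
    (N * Matrix.diagonal (fun i => ((d i : ℝ) : ℂ)) * star N) k k'
      = ∑ i, ((d i : ℝ) : ℂ) * (N k i * star (N k' i)) := by
  rw [Matrix.mul_apply]
  refine Finset.sum_congr rfl fun i _ => ?_
  rw [Matrix.mul_diagonal, Matrix.star_apply]
  ring

lemma unitary_row_sum {ι : Type*} [Fintype ι] [DecidableEq ι] {N : Matrix ι ι ℂ}
    (hN : N ∈ Matrix.unitaryGroup ι ℂ) (k : ι) : ∑ i, Complex.normSq (N k i) = 1 := by
  have h := Matrix.mem_unitaryGroup_iff.mp hN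
  have h2 := congrFun (congrFun h k) k
  rw [Matrix.mul_apply] at h2
  have h3 : ∀ i, N k i * (star N) i k = ((Complex.normSq (N k i) : ℝ) : ℂ) := by
    intro i; rw [Matrix.star_apply, Complex.star_def, Complex.mul_conj]
  rw [Finset.sum_congr rfl fun i _ => h3 i, Matrix.one_apply_eq] at h2
  exact_mod_cast h2

lemma unitary_col_sum {ι : Type*} [Fintype ι] [DecidableEq ι] {N : Matrix ι ι ℂ}
    (hN : N ∈ Matrix.unitaryGroup ι ℂ) (i : ι) : ∑ k, Complex.normSq (N k i) = 1 := by
  have h := Matrix.mem_unitaryGroup_iff'.mp hN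
  have h2 := congrFun (congrFun h i) i
  rw [Matrix.mul_apply] at h2
  have h3 : ∀ k, (star N) i k * N k i = ((Complex.normSq (N k i) : ℝ) : ℂ) := by
    intro k; rw [Matrix.star_apply, Complex.star_def, mul_comm, Complex.mul_conj]
  rw [Finset.sum_congr rfl fun k _ => h3 k, Matrix.one_apply_eq] at h2
  exact_mod_cast h2

/-- Dilution of relative entropy:
`D(λρ + (1−λ)σ ‖ σ) = λ D(ρ‖σ) − α` for some `0 ≤ α ≤ H₂(λ)`. -/
theorem relEnt_dilution {ι : Type*} [Fintype ι] [DecidableEq ι]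
    (ρ σ : Matrix ι ι ℂ) (hρ : IsDensity ρ) (hσ : IsDensity σ)
    (hsupp : SuppLE ρ σ) (t : ℝ) (ht0 : 0 ≤ t) (ht1 : t ≤ 1) :
    ∃ α : ℝ, 0 ≤ α ∧ α ≤ binEnt t ∧
      relEnt ((t : ℂ) • ρ + ((1 - t : ℝ) : ℂ) • σ) σ = t * relEnt ρ σ - α := by
  classical
  obtain ⟨hρP, hρtr⟩ := hρ
  obtain ⟨hσP, hσtr⟩ := hσ
  have ht1' : (0:ℝ) ≤ 1 - t := by linarith
  set τ : Matrix ι ι ℂ := (t : ℂ) • ρ + ((1 - t : ℝ) : ℂ) • σ with hτdef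
  have hτP : τ.PosSemidef := by
    rw [Matrix.posSemidef_iff_dotProduct_mulVec]
    constructor
    · show τᴴ = τ
      rw [hτdef, Matrix.conjTranspose_add, Matrix.conjTranspose_smul,
        Matrix.conjTranspose_smul, hρP.1, hσP.1]
      simp [Complex.star_def, Complex.conj_ofReal]
    · intro x
      rw [hτdef, Matrix.add_mulVec, Matrix.smul_mulVec, Matrix.smul_mulVec,
        dotProduct_add, dotProduct_smul, dotProduct_smul, smul_eq_mul, smul_eq_mul]
      have h1 : (0:ℂ) ≤ (t:ℂ) := Complex.zero_le_real.mpr ht0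
      have h2 : (0:ℂ) ≤ ((1-t:ℝ):ℂ) := Complex.zero_le_real.mpr ht1'
      exact add_nonneg (mul_nonneg h1 (hρP.dotProduct_mulVec_nonneg x))
          (mul_nonneg h2 (hσP.dotProduct_mulVec_nonneg x))
  set r : ι → ℝ := hτP.1.eigenvalues with hrdef
  set p : ι → ℝ := hρP.1.eigenvalues with hpdef
  set q : ι → ℝ := hσP.1.eigenvalues with hqdef
  set U : Matrix ι ι ℂ := (hτP.1.eigenvectorUnitary : Matrix ι ι ℂ) with hUdef
  set V : Matrix ι ι ℂ := (hρP.1.eigenvectorUnitary : Matrix ι ι ℂ) with hVdef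
  set W : Matrix ι ι ℂ := (hσP.1.eigenvectorUnitary : Matrix ι ι ℂ) with hWdef
  set N1 : Matrix ι ι ℂ := star U * V with hN1def
  set N2 : Matrix ι ι ℂ := star U * W with hN2def
  have hp0 : ∀ i, 0 ≤ p i := hρP.eigenvalues_nonneg
  have hq0 : ∀ j, 0 ≤ q j := hσP.eigenvalues_nonneg
  have hr0 : ∀ k, 0 ≤ r k := hτP.eigenvalues_nonneg
  -- spectral decompositions conjugated by U
  have hρspec : star U * ρ * U = N1 * Matrix.diagonal (fun i => ((p i : ℝ) : ℂ)) * star N1 := by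
    have h0 : ρ = V * Matrix.diagonal (fun i => ((p i : ℝ) : ℂ)) * star V :=
      hρP.1.spectral_theorem
    rw [hN1def, Matrix.star_mul, star_star]
    conv_lhs => rw [h0]
    simp only [Matrix.mul_assoc]
  have hσspec : star U * σ * U = N2 * Matrix.diagonal (fun j => ((q j : ℝ) : ℂ)) * star N2 := by
    have h0 : σ = W * Matrix.diagonal (fun j => ((q j : ℝ) : ℂ)) * star W :=
      hσP.1.spectral_theorem
    rw [hN2def, Matrix.star_mul, star_star]
    conv_lhs => rw [h0]
    simp only [Matrix.mul_assoc]
  have hdiag : Matrix.diagonal (fun k => ((r k : ℝ) : ℂ))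
      = (t:ℂ) • (N1 * Matrix.diagonal (fun i => ((p i : ℝ) : ℂ)) * star N1)
        + ((1-t:ℝ):ℂ) • (N2 * Matrix.diagonal (fun j => ((q j : ℝ) : ℂ)) * star N2) := by
    have h0 : star U * τ * U = Matrix.diagonal (fun k => ((r k : ℝ) : ℂ)) :=
      (Unitary.conjStarAlgAut_star_apply (S := ℂ) _ _).symm.trans
        (Matrix.IsHermitian.conjStarAlgAut_star_eigenvectorUnitary hτP.1)
    rw [← h0, ← hρspec, ← hσspec, hτdef]
    simp only [Matrix.mul_add, Matrix.add_mul, Matrix.mul_smul, Matrix.smul_mul]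
  have hkey : ∀ k k', (if k = k' then ((r k : ℝ) : ℂ) else 0)
      = (t:ℂ) * (∑ i, ((p i : ℝ) : ℂ) * (N1 k i * star (N1 k' i)))
        + ((1-t:ℝ):ℂ) * (∑ j, ((q j : ℝ) : ℂ) * (N2 k j * star (N2 k' j))) := by
    intro k k'
    have h0 := congrFun (congrFun hdiag k) k'
    rw [Matrix.diagonal_apply] at h0
    rw [h0]
    rw [Matrix.add_apply, Matrix.smul_apply, Matrix.smul_apply, smul_eq_mul, smul_eq_mul,
      conj_diag_entry, conj_diag_entry]
  -- real diagonal identity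
  set av : ι → ℝ := fun k => ∑ i, Complex.normSq (N1 k i) * p i with havdef
  set bv : ι → ℝ := fun k => ∑ j, Complex.normSq (N2 k j) * q j with hbvdef
  have hsum_real : ∀ (N : Matrix ι ι ℂ) (d : ι → ℝ) (k : ι),
      ∑ i, ((d i : ℝ) : ℂ) * (N k i * star (N k i))
        = ((∑ i, Complex.normSq (N k i) * d i : ℝ) : ℂ) := by
    intro N d k
    push_cast
    refine Finset.sum_congr rfl fun i _ => ?_
    rw [Complex.star_def, Complex.mul_conj]
    push_cast
    ring
  have hrk : ∀ k, r k = t * av k + (1-t) * bv k := by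
    intro k
    have h := hkey k k
    rw [if_pos rfl, hsum_real, hsum_real] at h
    have h2 : ((r k : ℝ) : ℂ) = ((t * av k + (1-t) * bv k : ℝ) : ℂ) := by
      rw [Complex.ofReal_add, Complex.ofReal_mul, Complex.ofReal_mul, h]
    exact_mod_cast h2
  have ha0 : ∀ k, 0 ≤ av k :=
    fun k => Finset.sum_nonneg fun i _ => mul_nonneg (Complex.normSq_nonneg _) (hp0 i)
  have hb0 : ∀ k, 0 ≤ bv k :=
    fun k => Finset.sum_nonneg fun j _ => mul_nonneg (Complex.normSq_nonneg _) (hq0 j)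
  -- unitarity
  have hN1mem : N1 ∈ Matrix.unitaryGroup ι ℂ := by
    rw [hN1def]
    exact mul_mem (Unitary.star_mem hτP.1.eigenvectorUnitary.2) hρP.1.eigenvectorUnitary.2
  have hN2mem : N2 ∈ Matrix.unitaryGroup ι ℂ := by
    rw [hN2def]
    exact mul_mem (Unitary.star_mem hτP.1.eigenvectorUnitary.2) hσP.1.eigenvectorUnitary.2
  have hrow1 := unitary_row_sum hN1mem
  have hcol1 := unitary_col_sum hN1mem
  have hrow2 := unitary_row_sum hN2mem
  have hcol2 := unitary_col_sum hN2mem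
  -- entropies
  set Snρ : ℝ := ∑ i, Real.negMulLog (p i) with hSnρ
  set Snσ : ℝ := ∑ j, Real.negMulLog (q j) with hSnσ
  set Snτ : ℝ := ∑ k, Real.negMulLog (r k) with hSnτ
  -- lower bound: concavity
  have hlow1 : ∀ k, t * Real.negMulLog (av k) + (1-t) * Real.negMulLog (bv k)
      ≤ Real.negMulLog (r k) := by
    intro k
    have := Real.concaveOn_negMulLog.2 (Set.mem_Ici.mpr (ha0 k)) (Set.mem_Ici.mpr (hb0 k))
      ht0 ht1' (by ring)
    simp only [smul_eq_mul] at this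
    rw [hrk k]
    exact this
  have hSa : Snρ ≤ ∑ k, Real.negMulLog (av k) :=
    sum_negMulLog_le_of_doublyStochastic (fun k i => Complex.normSq (N1 k i)) p
      (fun k i => Complex.normSq_nonneg _) hrow1 hcol1 hp0
  have hSb : Snσ ≤ ∑ k, Real.negMulLog (bv k) :=
    sum_negMulLog_le_of_doublyStochastic (fun k j => Complex.normSq (N2 k j)) q
      (fun k j => Complex.normSq_nonneg _) hrow2 hcol2 hq0
  have low : t * Snρ + (1-t) * Snσ ≤ Snτ := by
    calc t * Snρ + (1-t) * Snσ
        ≤ t * (∑ k, Real.negMulLog (av k)) + (1-t) * (∑ k, Real.negMulLog (bv k)) :=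
          add_le_add (mul_le_mul_of_nonneg_left hSa ht0) (mul_le_mul_of_nonneg_left hSb ht1')
      _ = ∑ k, (t * Real.negMulLog (av k) + (1-t) * Real.negMulLog (bv k)) := by
          rw [Finset.mul_sum, Finset.mul_sum, ← Finset.sum_add_distrib]
      _ ≤ ∑ k, Real.negMulLog (r k) := Finset.sum_le_sum fun k _ => hlow1 k
  -- upper bound: ensemble + Bessel
  set cB : ι ⊕ ι → ℝ := Sum.elim (fun i => t * p i) (fun j => (1-t) * q j) with hcBdef
  set Bm : ι → ι ⊕ ι → ℝ := fun k => Sum.elim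
    (fun i => t * p i * Complex.normSq (N1 k i))
    (fun j => (1-t) * q j * Complex.normSq (N2 k j)) with hBmdef
  set Mm : ι → ι ⊕ ι → ℂ := fun k => Sum.elim
    (fun i => ((Real.sqrt (t * p i) : ℝ) : ℂ) * N1 k i)
    (fun j => ((Real.sqrt ((1-t) * q j) : ℝ) : ℂ) * N2 k j) with hMmdef
  have horth : ∀ k k', ∑ x : ι ⊕ ι, Mm k x * star (Mm k' x)
      = if k = k' then ((r k : ℝ) : ℂ) else 0 := by
    intro k k'
    rw [Fintype.sum_sum_type]
    have h1 : ∀ i, Mm k (Sum.inl i) * star (Mm k' (Sum.inl i))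
        = (t:ℂ) * (((p i : ℝ) : ℂ) * (N1 k i * star (N1 k' i))) := by
      intro i
      simp only [hMmdef, Sum.elim_inl]
      rw [star_mul', Complex.star_def, Complex.conj_ofReal]
      have hs : ((Real.sqrt (t * p i) : ℝ) : ℂ) * ((Real.sqrt (t * p i) : ℝ) : ℂ)
          = (t:ℂ) * ((p i : ℝ) : ℂ) := by
        rw [← Complex.ofReal_mul, Real.mul_self_sqrt (mul_nonneg ht0 (hp0 i))]
        push_cast
        ring
      calc ((Real.sqrt (t * p i) : ℝ) : ℂ) * N1 k i
            * (((Real.sqrt (t * p i) : ℝ) : ℂ) * (starRingEnd ℂ) (N1 k' i))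
          = (((Real.sqrt (t * p i) : ℝ) : ℂ) * ((Real.sqrt (t * p i) : ℝ) : ℂ))
            * (N1 k i * (starRingEnd ℂ) (N1 k' i)) := by ring
        _ = (t:ℂ) * (((p i : ℝ) : ℂ) * (N1 k i * (starRingEnd ℂ) (N1 k' i))) := by
            rw [hs]; ring
    have h2 : ∀ j, Mm k (Sum.inr j) * star (Mm k' (Sum.inr j))
        = ((1-t:ℝ):ℂ) * (((q j : ℝ) : ℂ) * (N2 k j * star (N2 k' j))) := by
      intro j
      simp only [hMmdef, Sum.elim_inr]
      rw [star_mul', Complex.star_def, Complex.conj_ofReal]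
      have hs : ((Real.sqrt ((1-t) * q j) : ℝ) : ℂ) * ((Real.sqrt ((1-t) * q j) : ℝ) : ℂ)
          = ((1-t:ℝ):ℂ) * ((q j : ℝ) : ℂ) := by
        rw [← Complex.ofReal_mul, Real.mul_self_sqrt (mul_nonneg ht1' (hq0 j))]
        push_cast
        ring
      calc ((Real.sqrt ((1-t) * q j) : ℝ) : ℂ) * N2 k j
            * (((Real.sqrt ((1-t) * q j) : ℝ) : ℂ) * (starRingEnd ℂ) (N2 k' j))
          = (((Real.sqrt ((1-t) * q j) : ℝ) : ℂ) * ((Real.sqrt ((1-t) * q j) : ℝ) : ℂ))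
            * (N2 k j * (starRingEnd ℂ) (N2 k' j)) := by ring
        _ = ((1-t:ℝ):ℂ) * (((q j : ℝ) : ℂ) * (N2 k j * (starRingEnd ℂ) (N2 k' j))) := by
            rw [hs]; ring
    rw [Finset.sum_congr rfl fun i _ => h1 i, Finset.sum_congr rfl fun j _ => h2 j,
      ← Finset.mul_sum, ← Finset.mul_sum, ← hkey k k']
  have hnormSqM : ∀ k x, Complex.normSq (Mm k x) = Bm k x := by
    intro k x
    cases x with
    | inl i =>
        simp only [hMmdef, hBmdef, Sum.elim_inl]
        rw [Complex.normSq_mul, Complex.normSq_ofReal,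
          Real.mul_self_sqrt (mul_nonneg ht0 (hp0 i))]
    | inr j =>
        simp only [hMmdef, hBmdef, Sum.elim_inr]
        rw [Complex.normSq_mul, Complex.normSq_ofReal,
          Real.mul_self_sqrt (mul_nonneg ht1' (hq0 j))]
  have hbessel : ∀ x, ∑ k, Bm k x / r k ≤ 1 := by
    intro x
    have := bessel_aux Mm r hr0 horth x
    rw [Finset.sum_congr rfl fun k _ => by rw [hnormSqM k x]] at this
    exact this
  have hB0' : ∀ k x, 0 ≤ Bm k x := by
    intro k x
    cases x with
    | inl i => exact mul_nonneg (mul_nonneg ht0 (hp0 i)) (Complex.normSq_nonneg _)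
    | inr j => exact mul_nonneg (mul_nonneg ht1' (hq0 j)) (Complex.normSq_nonneg _)
  have hrowB : ∀ k, ∑ x, Bm k x = r k := by
    intro k
    rw [Fintype.sum_sum_type]
    simp only [hBmdef, Sum.elim_inl, Sum.elim_inr]
    rw [hrk k, havdef, hbvdef]
    rw [Finset.mul_sum, Finset.mul_sum]
    congr 1
    · exact Finset.sum_congr rfl fun i _ => by ring
    · exact Finset.sum_congr rfl fun j _ => by ring
  have hcolB : ∀ x, ∑ k, Bm k x = cB x := by
    intro x
    cases x with
    | inl i =>
        simp only [hBmdef, hcBdef, Sum.elim_inl]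
        rw [← Finset.mul_sum, hcol1 i, mul_one]
    | inr j =>
        simp only [hBmdef, hcBdef, Sum.elim_inr]
        rw [← Finset.mul_sum, hcol2 j, mul_one]
  have high0 := mixture_entropy_le Bm r cB hB0' hr0 hrowB hcolB hbessel
  -- traces of eigenvalues
  have hsum_p : ∑ i, p i = 1 := by
    have := trace_eq_sum_eigenvalues hρP.1
    rw [hρtr] at this
    exact_mod_cast this.symm
  have hsum_q : ∑ j, q j = 1 := by
    have := trace_eq_sum_eigenvalues hσP.1
    rw [hσtr] at this
    exact_mod_cast this.symm
  have hsplit : ∑ x : ι ⊕ ι, Real.negMulLog (cB x)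
      = Real.negMulLog t + t * Snρ + (Real.negMulLog (1-t) + (1-t) * Snσ) := by
    rw [Fintype.sum_sum_type]
    simp only [hcBdef, Sum.elim_inl, Sum.elim_inr]
    have e1 : ∑ i, Real.negMulLog (t * p i) = Real.negMulLog t + t * Snρ := by
      calc ∑ i, Real.negMulLog (t * p i)
          = ∑ i, (p i * Real.negMulLog t + t * Real.negMulLog (p i)) :=
            Finset.sum_congr rfl fun i _ => Real.negMulLog_mul t (p i)
        _ = (∑ i, p i) * Real.negMulLog t + t * Snρ := by
            rw [Finset.sum_add_distrib, ← Finset.sum_mul, ← Finset.mul_sum, hSnρ]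
        _ = Real.negMulLog t + t * Snρ := by rw [hsum_p, one_mul]
    have e2 : ∑ j, Real.negMulLog ((1-t) * q j) = Real.negMulLog (1-t) + (1-t) * Snσ := by
      calc ∑ j, Real.negMulLog ((1-t) * q j)
          = ∑ j, (q j * Real.negMulLog (1-t) + (1-t) * Real.negMulLog (q j)) :=
            Finset.sum_congr rfl fun j _ => Real.negMulLog_mul (1-t) (q j)
        _ = (∑ j, q j) * Real.negMulLog (1-t) + (1-t) * Snσ := by
            rw [Finset.sum_add_distrib, ← Finset.sum_mul, ← Finset.mul_sum, hSnσ]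
        _ = Real.negMulLog (1-t) + (1-t) * Snσ := by rw [hsum_q, one_mul]
    rw [e1, e2]
  have high : Snτ ≤ Real.negMulLog t + t * Snρ + (Real.negMulLog (1-t) + (1-t) * Snσ) := by
    rw [hSnτ, ← hsplit]
    exact high0
  -- trace / relEnt computations
  have hL : (0:ℝ) < Real.log 2 := Real.log_pos one_lt_two
  have hreτ : ((τ * matLog τ).trace).re = -(Snτ / Real.log 2) := by
    rw [trace_mul_matLog_self hτP.1, Complex.ofReal_re]
    have hterm : ∀ k, r k * Real.logb 2 (r k) = -(Real.negMulLog (r k) / Real.log 2) := by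
      intro k
      rw [Real.logb, Real.negMulLog]
      ring
    rw [Finset.sum_congr rfl fun k _ => hterm k, Finset.sum_neg_distrib, ← Finset.sum_div,
      ← hSnτ]
  have hreρ : ((ρ * matLog ρ).trace).re = -(Snρ / Real.log 2) := by
    rw [trace_mul_matLog_self hρP.1, Complex.ofReal_re]
    have hterm : ∀ i, p i * Real.logb 2 (p i) = -(Real.negMulLog (p i) / Real.log 2) := by
      intro i
      rw [Real.logb, Real.negMulLog]
      ring
    rw [Finset.sum_congr rfl fun i _ => hterm i, Finset.sum_neg_distrib, ← Finset.sum_div,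
      ← hSnρ]
  have hreσ : ((σ * matLog σ).trace).re = -(Snσ / Real.log 2) := by
    rw [trace_mul_matLog_self hσP.1, Complex.ofReal_re]
    have hterm : ∀ j, q j * Real.logb 2 (q j) = -(Real.negMulLog (q j) / Real.log 2) := by
      intro j
      rw [Real.logb, Real.negMulLog]
      ring
    rw [Finset.sum_congr rfl fun j _ => hterm j, Finset.sum_neg_distrib, ← Finset.sum_div,
      ← hSnσ]
  have hcross : ((τ * matLog σ).trace).re
      = t * ((ρ * matLog σ).trace).re + (1-t) * ((σ * matLog σ).trace).re := by
    have hτm : τ * matLog σ = (t:ℂ) • (ρ * matLog σ) + ((1-t:ℝ):ℂ) • (σ * matLog σ) := by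
      rw [hτdef, Matrix.add_mul, Matrix.smul_mul, Matrix.smul_mul]
    rw [hτm, Matrix.trace_add, Matrix.trace_smul, Matrix.trace_smul, smul_eq_mul, smul_eq_mul,
      Complex.add_re, Complex.re_ofReal_mul, Complex.re_ofReal_mul]
  have hrel : ∀ (X Y : Matrix ι ι ℂ), relEnt X Y
      = ((X * matLog X).trace).re - ((X * matLog Y).trace).re := by
    intro X Y
    rw [relEnt, Matrix.mul_sub, Matrix.trace_sub, Complex.sub_re]
  -- conclude
  refine ⟨(Snτ - t * Snρ - (1-t) * Snσ) / Real.log 2, ?_, ?_, ?_⟩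
  · apply div_nonneg _ hL.le
    linarith
  · have hbin : binEnt t = (Real.negMulLog t + Real.negMulLog (1-t)) / Real.log 2 := by
      rw [binEnt, Real.logb, Real.logb, Real.negMulLog, Real.negMulLog]
      field_simp
      ring
    rw [hbin]
    exact (div_le_div_iff_of_pos_right hL).mpr (by linarith)
  · rw [hrel, hrel, hcross, hreτ, hreρ, hreσ]
    field_simp
    ring
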